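/- arXiv:2107.02465 — 3 statements merged into one kernel-verified Lean document; each statement's English description precedes it below -/
import Mathlib

section
/- Let X_1,…,X_n be independent integrable random variables on a probability space (Ω, F, P) with E[X_i] = μ for all i, and suppose E[|X_i|^{1+α}] ≤ C_α for some α ∈ (0,1] and all i ≤ n. Then for every Lipschitz function φ : ℝ → ℝ with Lipschitz constant L, |E[φ(S_n/n)] − φ(μ)| ≤ L · (4C_α/n^α)^{1/(1+α)}, where S_n := X_1 + ⋯ + X_n. -/
open MeasureTheory ProbabilityTheory

namespace LLNaux

/-- Tangent line inequality for rpow. -/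
lemma tangent_rpow {p a b : ℝ} (ha : 0 ≤ a) (hb : 0 ≤ b) (hp : 1 ≤ p) :
    a ^ p + p * a ^ (p - 1) * (b - a) ≤ b ^ p := by
  have hp0 : (0:ℝ) < p := lt_of_lt_of_le one_pos hp
  rcases eq_or_lt_of_le ha with rfl | ha'
  · rcases eq_or_lt_of_le hp with rfl | hp'
    · simp [Real.rpow_one]
    · rw [Real.zero_rpow hp0.ne', Real.zero_rpow (show p - 1 ≠ 0 by linarith)]
      have := Real.rpow_nonneg hb p
      nlinarith
  · have hs : (-1:ℝ) ≤ b / a - 1 := by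
      have : 0 ≤ b / a := div_nonneg hb ha'.le
      linarith
    have h := one_add_mul_self_le_rpow_one_add hs hp
    have h1 : (1 : ℝ) + (b / a - 1) = b / a := by ring
    rw [h1] at h
    have h2 : (b / a) ^ p = b ^ p / a ^ p := Real.div_rpow hb ha'.le p
    rw [h2] at h
    have hap : (0:ℝ) < a ^ p := Real.rpow_pos_of_pos ha' p
    have h3 := mul_le_mul_of_nonneg_left h hap.le
    rw [mul_div_cancel₀ _ hap.ne'] at h3
    calc a ^ p + p * a ^ (p - 1) * (b - a)
        = a ^ p * (1 + p * (b / a - 1)) := by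
          have : a ^ (p - 1) = a ^ p / a := by
            rw [Real.rpow_sub ha', Real.rpow_one]
          rw [this]; field_simp
      _ ≤ b ^ p := h3

/-- Subadditivity of rpow for exponents in `[0,1]`. -/
lemma subadd_rpow {q a b : ℝ} (ha : 0 ≤ a) (hb : 0 ≤ b) (hq0 : 0 ≤ q) (hq1 : q ≤ 1) :
    (a + b) ^ q ≤ a ^ q + b ^ q := by
  have h := NNReal.rpow_add_le_add_rpow a.toNNReal b.toNNReal hq0 hq1
  have := NNReal.coe_le_coe.mpr h
  push_cast [NNReal.coe_rpow] at this
  rwa [Real.coe_toNNReal a ha, Real.coe_toNNReal b hb] at this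

noncomputable def psi (p x : ℝ) : ℝ := Real.sign x * |x| ^ (p - 1)

lemma measurable_psi {p : ℝ} (hp : 1 ≤ p) : Measurable (psi p) := by
  unfold psi Real.sign
  apply Measurable.mul
  · refine Measurable.ite ?_ measurable_const (Measurable.ite ?_ measurable_const measurable_const)
    · exact measurableSet_lt measurable_id measurable_const
    · exact measurableSet_lt measurable_const measurable_id
  · exact (Real.continuous_rpow_const (by linarith)).measurable.comp measurable_abs

lemma abs_psi_le (p x : ℝ) : |psi p x| ≤ |x| ^ (p - 1) := by
  unfold psi
  rw [abs_mul, abs_of_nonneg (Real.rpow_nonneg (abs_nonneg x) _)]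
  have h1 : |Real.sign x| ≤ 1 := by
    rcases Real.sign_apply_eq x with h | h | h <;> simp [h]
  nlinarith [Real.rpow_nonneg (abs_nonneg x) (p - 1), abs_nonneg (Real.sign x)]

lemma rpow_sub_one_le {p : ℝ} (hp : 1 ≤ p) {t : ℝ} (ht : 0 ≤ t) : t ^ (p - 1) ≤ 1 + t ^ p := by
  rcases le_total t 1 with h | h
  · have h2 : t ^ (p - 1) ≤ 1 := Real.rpow_le_one ht h (by linarith)
    nlinarith [Real.rpow_nonneg ht p]
  · have h2 : t ^ (p - 1) ≤ t ^ p := Real.rpow_le_rpow_of_exponent_le h (by linarith)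
    linarith

lemma abs_add_rpow_le {p : ℝ} (hp : 0 ≤ p) (a b : ℝ) :
    |a + b| ^ p ≤ 2 ^ p * (|a| ^ p + |b| ^ p) := by
  have h2p : (0:ℝ) ≤ 2 ^ p := Real.rpow_nonneg (by norm_num) p
  rcases le_total |a| |b| with h | h
  · have h1 : |a + b| ≤ 2 * |b| := by have := abs_add_le a b; linarith
    have h2 : |a + b| ^ p ≤ (2 * |b|) ^ p := Real.rpow_le_rpow (abs_nonneg _) h1 hp
    rw [Real.mul_rpow (by norm_num) (abs_nonneg b)] at h2
    nlinarith [Real.rpow_nonneg (abs_nonneg a) p]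
  · have h1 : |a + b| ≤ 2 * |a| := by have := abs_add_le a b; linarith
    have h2 : |a + b| ^ p ≤ (2 * |a|) ^ p := Real.rpow_le_rpow (abs_nonneg _) h1 hp
    rw [Real.mul_rpow (by norm_num) (abs_nonneg a)] at h2
    nlinarith [Real.rpow_nonneg (abs_nonneg b) p]

lemma keyB_nonneg {p : ℝ} (hp1 : 1 ≤ p) (hp2 : p ≤ 2) {x : ℝ} (hx : 0 ≤ x) (y : ℝ) :
    |x + y| ^ p ≤ x ^ p + p * x ^ (p - 1) * y + 2 * |y| ^ p := by
  have hp0 : (0:ℝ) < p := by linarith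
  have hq0 : (0:ℝ) ≤ p - 1 := by linarith
  have hq1 : p - 1 ≤ 1 := by linarith
  rcases le_or_gt 0 y with hy | hy
  · rw [abs_of_nonneg (by linarith : (0:ℝ) ≤ x + y), abs_of_nonneg hy]
    have ht := tangent_rpow (by linarith : (0:ℝ) ≤ x + y) hx hp1
    have hs := subadd_rpow hx hy hq0 hq1
    have hyy : y ^ (p - 1) * y = y ^ p := by
      rcases eq_or_lt_of_le hy with rfl | hy'
      · rw [Real.zero_rpow hp0.ne']; ring
      · rw [← Real.rpow_add_one hy'.ne', sub_add_cancel]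
    have h2 : p * ((x + y) ^ (p - 1) * y) ≤ p * (x ^ (p - 1) * y + y ^ p) := by
      apply mul_le_mul_of_nonneg_left _ hp0.le
      nlinarith [mul_le_mul_of_nonneg_right hs hy]
    nlinarith [ht, Real.rpow_nonneg hy p]
  · rcases le_or_gt 0 (x + y) with hxy | hxy
    · rw [abs_of_nonneg hxy, abs_of_neg hy]
      have ht := tangent_rpow hxy hx hp1
      have hs := subadd_rpow hxy (by linarith : (0:ℝ) ≤ -y) hq0 hq1
      rw [show x + y + -y = x by ring] at hs
      have hyy : (-y) ^ (p - 1) * (-y) = (-y) ^ p := by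
        rw [← Real.rpow_add_one (by linarith : -y ≠ 0), sub_add_cancel]
      have h2 : p * ((x + y) ^ (p - 1) * y) ≤ p * (x ^ (p - 1) * y + (-y) ^ p) := by
        apply mul_le_mul_of_nonneg_left _ hp0.le
        nlinarith [mul_le_mul_of_nonneg_right hs (by linarith : (0:ℝ) ≤ -y)]
      nlinarith [ht, Real.rpow_nonneg (by linarith : (0:ℝ) ≤ -y) p]
    · rw [abs_of_neg hxy, abs_of_neg hy, show -(x + y) = -y - x by ring]
      have ht1 := tangent_rpow (by linarith : (0:ℝ) ≤ -y - x) (by linarith : (0:ℝ) ≤ -y) hp1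
      have ht2 := tangent_rpow hx (by linarith : (0:ℝ) ≤ -y) hp1
      have hxx : x ^ (p - 1) * x = x ^ p := by
        rcases eq_or_lt_of_le hx with rfl | hx'
        · rw [Real.zero_rpow hp0.ne']; ring
        · rw [← Real.rpow_add_one hx'.ne', sub_add_cancel]
      have hb1 : 0 ≤ p * ((-y - x) ^ (p - 1) * x) := by
        have := Real.rpow_nonneg (by linarith : (0:ℝ) ≤ -y - x) (p - 1)
        positivity
      nlinarith [ht1, ht2, hxx, Real.rpow_nonneg (by linarith : (0:ℝ) ≤ -y) p,
        Real.rpow_nonneg hx p]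

lemma keyB {p : ℝ} (hp1 : 1 ≤ p) (hp2 : p ≤ 2) (x y : ℝ) :
    |x + y| ^ p ≤ |x| ^ p + p * psi p x * y + 2 * |y| ^ p := by
  have hp0 : (0:ℝ) < p := by linarith
  unfold psi
  rcases lt_trichotomy x 0 with hx | rfl | hx
  · have h := keyB_nonneg hp1 hp2 (x := -x) (by linarith) (-y)
    rw [show -x + -y = -(x + y) by ring, abs_neg, abs_neg] at h
    rw [Real.sign_of_neg hx, abs_of_neg hx]
    nlinarith [h]
  · rw [Real.sign_zero, zero_add, abs_zero, Real.zero_rpow hp0.ne']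
    nlinarith [Real.rpow_nonneg (abs_nonneg y) p]
  · have h := keyB_nonneg hp1 hp2 hx.le y
    rw [Real.sign_of_pos hx, abs_of_pos hx]
    nlinarith [h]

lemma vbe {Ω : Type*} [MeasurableSpace Ω] (P : Measure Ω) [IsProbabilityMeasure P]
    {n : ℕ} {Y : Fin n → Ω → ℝ} (hYmeas : ∀ i, Measurable (Y i))
    (hYindep : iIndepFun Y P)
    (hYint : ∀ i, Integrable (Y i) P) (hY0 : ∀ i, ∫ ω, Y i ω ∂P = 0)
    {p : ℝ} (hp1 : 1 ≤ p) (hp2 : p ≤ 2)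
    (hYp : ∀ i, Integrable (fun ω => |Y i ω| ^ p) P) (s : Finset (Fin n)) :
    Integrable (fun ω => |∑ i ∈ s, Y i ω| ^ p) P ∧
      ∫ ω, |∑ i ∈ s, Y i ω| ^ p ∂P ≤ 2 * ∑ i ∈ s, ∫ ω, |Y i ω| ^ p ∂P := by
  classical
  have hp0 : (0:ℝ) < p := by linarith
  induction' s using Finset.induction_on with a s ha ih
  · constructor
    · simpa [Real.zero_rpow hp0.ne'] using (integrable_const (0:ℝ))
    · simp [Real.zero_rpow hp0.ne']
  · set S : Ω → ℝ := fun ω => ∑ i ∈ s, Y i ω with hS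
    have hSmeas : Measurable S := Finset.measurable_sum s (fun i _ => hYmeas i)
    have hSp : Integrable (fun ω => |S ω| ^ p) P := ih.1
    have hind : IndepFun S (Y a) P := by
      have h := hYindep.indepFun_finsetSum_of_notMem hYmeas ha
      have he : (∑ j ∈ s, Y j) = S := by ext ω; simp [hS]
      rwa [he] at h
    -- ψ ∘ S is integrable
    have hψSmeas : Measurable (fun ω => psi p (S ω)) := (measurable_psi hp1).comp hSmeas
    have hψS : Integrable (fun ω => psi p (S ω)) P := by
      refine Integrable.mono ((integrable_const (1:ℝ)).add hSp) hψSmeas.aestronglyMeasurable ?_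
      filter_upwards with ω
      simp only [Pi.add_apply, Real.norm_eq_abs]
      rw [abs_of_nonneg (by positivity : (0:ℝ) ≤ 1 + |S ω| ^ p)]
      exact (abs_psi_le p (S ω)).trans (rpow_sub_one_le hp1 (abs_nonneg _))
    have hindψ : IndepFun (fun ω => psi p (S ω)) (Y a) P :=
      hind.comp (measurable_psi hp1) measurable_id
    have hprod : Integrable (fun ω => psi p (S ω) * Y a ω) P :=
      hindψ.integrable_mul hψS (hYint a)
    have hsum_meas : Measurable (fun ω => |S ω + Y a ω| ^ p) :=
      (Real.continuous_rpow_const hp0.le).measurable.comp (hSmeas.add (hYmeas a)).abs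
    have hsum_int : Integrable (fun ω => |S ω + Y a ω| ^ p) P := by
      refine Integrable.mono ((hSp.add (hYp a)).const_mul (2 ^ p))
        hsum_meas.aestronglyMeasurable ?_
      filter_upwards with ω
      simp only [Pi.add_apply, Real.norm_eq_abs]
      rw [abs_of_nonneg (Real.rpow_nonneg (abs_nonneg _) _), abs_of_nonneg (by positivity :
          (0:ℝ) ≤ 2 ^ p * (|S ω| ^ p + |Y a ω| ^ p))]
      exact abs_add_rpow_le hp0.le _ _
    have hRHS : Integrable
        (fun ω => |S ω| ^ p + p * (psi p (S ω) * Y a ω) + 2 * |Y a ω| ^ p) P :=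
      (hSp.add (hprod.const_mul p)).add ((hYp a).const_mul 2)
    have hle : ∫ ω, |S ω + Y a ω| ^ p ∂P ≤
        ∫ ω, (|S ω| ^ p + p * (psi p (S ω) * Y a ω) + 2 * |Y a ω| ^ p) ∂P := by
      refine integral_mono hsum_int hRHS (fun ω => ?_)
      have := keyB hp1 hp2 (S ω) (Y a ω)
      linarith [this]
    have hzero : ∫ ω, psi p (S ω) * Y a ω ∂P = 0 := by
      have h := hindψ.integral_fun_mul_eq_mul_integral hψS.aestronglyMeasurable (hYint a).aestronglyMeasurable
      rw [hY0 a, mul_zero] at h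
      exact h
    have hval : ∫ ω, (|S ω| ^ p + p * (psi p (S ω) * Y a ω) + 2 * |Y a ω| ^ p) ∂P
        = ∫ ω, |S ω| ^ p ∂P + 2 * ∫ ω, |Y a ω| ^ p ∂P := by
      have hI12 : Integrable (fun ω => |S ω| ^ p + p * (psi p (S ω) * Y a ω)) P :=
        hSp.add (hprod.const_mul p)
      have hI3 : Integrable (fun ω => 2 * |Y a ω| ^ p) P := (hYp a).const_mul 2
      rw [integral_add hI12 hI3, integral_add hSp (hprod.const_mul p), integral_const_mul,
        integral_const_mul, hzero]
      ring
    have hfun : (fun ω => |∑ i ∈ insert a s, Y i ω| ^ p) = fun ω => |S ω + Y a ω| ^ p := by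
      ext ω
      rw [Finset.sum_insert ha, add_comm]
    constructor
    · rw [hfun]; exact hsum_int
    · rw [hfun, Finset.sum_insert ha]
      have := ih.2
      rw [hval] at hle
      linarith

end LLNaux

open LLNaux

/-- Classical corollary: for independent integrable random variables with common
mean `μ` and `(1+α)`-moments bounded by `C_α`,
`|E[φ(S_n/n)] - φ(μ)| ≤ L (4C_α / n^α)^{1/(1+α)}` for Lipschitz `φ`. -/
theorem lln_rate_classical
    {Ω : Type*} [MeasurableSpace Ω] (P : Measure Ω) [IsProbabilityMeasure P]
    (n : ℕ) (hn : 1 ≤ n) (X : Fin n → Ω → ℝ)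
    (hmeas : ∀ i, Measurable (X i))
    (hindep : iIndepFun X P)
    (hint : ∀ i, Integrable (X i) P)
    (μ : ℝ) (hmean : ∀ i, ∫ ω, X i ω ∂P = μ)
    (α : ℝ) (hα : α ∈ Set.Ioc (0 : ℝ) 1) (Cα : ℝ) (hCα : 0 < Cα)
    (hmom : ∀ i, Integrable (fun ω => |X i ω| ^ (1 + α)) P ∧
      ∫ ω, |X i ω| ^ (1 + α) ∂P ≤ Cα)
    (φ : ℝ → ℝ) (L : NNReal) (hφ : LipschitzWith L φ) :
    |∫ ω, φ ((∑ i, X i ω) / n) ∂P - φ μ| ≤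
      (L : ℝ) * (4 * Cα / (n : ℝ) ^ α) ^ (1 / (1 + α)) := by
  obtain ⟨hα0, hα1⟩ := hα
  set p : ℝ := 1 + α with hpdef
  have hp1 : 1 ≤ p := by rw [hpdef]; linarith
  have hp2 : p ≤ 2 := by rw [hpdef]; linarith
  have hp0 : (0:ℝ) < p := by linarith
  have hn0 : (0:ℝ) < (n:ℝ) := by exact_mod_cast Nat.lt_of_lt_of_le Nat.zero_lt_one hn
  set Y : Fin n → Ω → ℝ := fun i ω => X i ω - μ with hYdef
  have hYmeas : ∀ i, Measurable (Y i) := fun i => (hmeas i).sub measurable_const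
  have hYindep : iIndepFun Y P :=
    hindep.comp (fun _ => fun x : ℝ => x - μ) (fun _ => measurable_id.sub measurable_const)
  have hYint : ∀ i, Integrable (Y i) P := fun i => (hint i).sub (integrable_const μ)
  have hY0 : ∀ i, ∫ ω, Y i ω ∂P = 0 := by
    intro i
    have : (fun ω => Y i ω) = fun ω => X i ω - μ := rfl
    rw [this, integral_sub (hint i) (integrable_const μ), hmean i, integral_const]
    simp
  have hYp : ∀ i, Integrable (fun ω => |Y i ω| ^ p) P := by
    intro i
    have hm : Measurable fun ω => |Y i ω| ^ p :=
      (Real.continuous_rpow_const hp0.le).measurable.comp (hYmeas i).abs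
    refine Integrable.mono (((hmom i).1.add (integrable_const (|μ| ^ p))).const_mul (2 ^ p))
      hm.aestronglyMeasurable ?_
    filter_upwards with ω
    simp only [Pi.add_apply, Real.norm_eq_abs]
    rw [abs_of_nonneg (Real.rpow_nonneg (abs_nonneg _) _),
      abs_of_nonneg (by positivity : (0:ℝ) ≤ 2 ^ p * (|X i ω| ^ p + |μ| ^ p))]
    have h := abs_add_rpow_le hp0.le (X i ω) (-μ)
    rw [abs_neg] at h
    calc |Y i ω| ^ p = |X i ω + -μ| ^ p := by rw [show X i ω + -μ = X i ω - μ by ring]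
      _ ≤ _ := h
  have hYple : ∀ i, ∫ ω, |Y i ω| ^ p ∂P ≤ 2 * Cα := by
    intro i
    have hkey : ∀ ω, |Y i ω| ^ p ≤ |(-μ)| ^ p + p * psi p (-μ) * X i ω + 2 * |X i ω| ^ p := by
      intro ω
      calc |Y i ω| ^ p = |(-μ) + X i ω| ^ p := by rw [show -μ + X i ω = X i ω - μ by ring]
        _ ≤ _ := keyB hp1 hp2 (-μ) (X i ω)
    have hIa : Integrable (fun ω => |(-μ)| ^ p + p * psi p (-μ) * X i ω) P :=
      (integrable_const _).add ((hint i).const_mul _)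
    have hRint : Integrable
        (fun ω => |(-μ)| ^ p + p * psi p (-μ) * X i ω + 2 * |X i ω| ^ p) P :=
      hIa.add ((hmom i).1.const_mul 2)
    have h1 : ∫ ω, |Y i ω| ^ p ∂P ≤
        ∫ ω, (|(-μ)| ^ p + p * psi p (-μ) * X i ω + 2 * |X i ω| ^ p) ∂P :=
      integral_mono (hYp i) hRint hkey
    have h2 : ∫ ω, (|(-μ)| ^ p + p * psi p (-μ) * X i ω + 2 * |X i ω| ^ p) ∂P
        = |μ| ^ p + p * psi p (-μ) * μ + 2 * ∫ ω, |X i ω| ^ p ∂P := by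
      rw [integral_add hIa ((hmom i).1.const_mul 2),
        integral_add (integrable_const _) ((hint i).const_mul _), integral_const,
        integral_const_mul, integral_const_mul, hmean i]
      simp [abs_neg]
    have hsm : psi p (-μ) * μ = -(|μ| ^ p) := by
      unfold psi
      rcases lt_trichotomy μ 0 with hμ | hμ | hμ
      · rw [Real.sign_of_pos (by linarith : 0 < -μ), abs_neg, one_mul, abs_of_neg hμ]
        rw [show (-μ) ^ (p-1) * μ = -((-μ) ^ (p-1) * (-μ)) by ring,
          ← Real.rpow_add_one (by linarith : -μ ≠ 0), sub_add_cancel]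
      · subst hμ; simp [Real.zero_rpow hp0.ne']
      · rw [Real.sign_of_neg (by linarith : -μ < 0), abs_neg, abs_of_pos hμ]
        rw [show (-1 : ℝ) * μ ^ (p-1) * μ = -(μ ^ (p-1) * μ) by ring]
        rw [← Real.rpow_add_one hμ.ne', sub_add_cancel]
    have h3 : |μ| ^ p + p * psi p (-μ) * μ ≤ 0 := by
      have := Real.rpow_nonneg (abs_nonneg μ) p
      rw [show p * psi p (-μ) * μ = p * (psi p (-μ) * μ) by ring, hsm]
      nlinarith
    have h4 := (hmom i).2
    nlinarith [h1, h2, h3, h4]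
  obtain ⟨hZp_int, hZp_le⟩ := vbe P hYmeas hYindep hYint hY0 hp1 hp2 hYp Finset.univ
  set Z : Ω → ℝ := fun ω => |∑ i, Y i ω| with hZdef
  have hZp_int' : Integrable (fun ω => Z ω ^ p) P := hZp_int
  have hZ_le4 : ∫ ω, Z ω ^ p ∂P ≤ 4 * n * Cα := by
    have hsum : ∑ i, ∫ ω, |Y i ω| ^ p ∂P ≤ (n:ℝ) * (2 * Cα) := by
      calc ∑ i, ∫ ω, |Y i ω| ^ p ∂P ≤ ∑ _i : Fin n, (2 * Cα) :=
            Finset.sum_le_sum (fun i _ => hYple i)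
        _ = (n:ℝ) * (2 * Cα) := by
            simp [Finset.sum_const, Finset.card_univ]
    have h5 : ∫ ω, Z ω ^ p ∂P ≤ 2 * ∑ i, ∫ ω, |Y i ω| ^ p ∂P := hZp_le
    nlinarith
  have hZint : Integrable Z P := (integrable_finset_sum _ (fun i _ => hYint i)).abs
  set m : ℝ := ∫ ω, Z ω ∂P with hmdef
  have hmnn : 0 ≤ m := integral_nonneg (fun ω => abs_nonneg _)
  have hJ : m ^ p ≤ 4 * n * Cα := by
    have hkey : ∀ ω, m ^ p + p * m ^ (p-1) * (Z ω - m) ≤ Z ω ^ p := fun ω =>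
      tangent_rpow hmnn (abs_nonneg _) hp1
    have hI2 : Integrable (fun ω => p * m ^ (p-1) * (Z ω - m)) P :=
      ((hZint.sub (integrable_const m)).const_mul _)
    have hL2 : Integrable (fun ω => m ^ p + p * m ^ (p-1) * (Z ω - m)) P :=
      (integrable_const _).add hI2
    have hle := integral_mono hL2 hZp_int' hkey
    have hI3 : Integrable (fun ω => Z ω - m) P := hZint.sub (integrable_const m)
    have hLval : ∫ ω, (m ^ p + p * m ^ (p-1) * (Z ω - m)) ∂P = m ^ p := by
      rw [integral_add (integrable_const _) hI2, integral_const, integral_const_mul,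
        integral_sub hZint (integrable_const m), integral_const]
      simp [← hmdef]
    rw [hLval] at hle
    linarith [hZ_le4]
  have hmle : m ≤ (4 * n * Cα) ^ (1/p) := by
    have h0 : m = (m ^ p) ^ (1/p) := by
      rw [one_div, Real.rpow_rpow_inv hmnn hp0.ne']
    rw [h0]
    exact Real.rpow_le_rpow (Real.rpow_nonneg hmnn p) hJ (by positivity)
  have hTsub : ∀ ω, (∑ i, X i ω) / (n:ℝ) - μ = (∑ i, Y i ω) / n := by
    intro ω
    have hs : ∑ i, Y i ω = ∑ i, X i ω - (n:ℝ) * μ := by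
      show ∑ i : Fin n, (X i ω - μ) = _
      rw [Finset.sum_sub_distrib, Finset.sum_const, Finset.card_univ, Fintype.card_fin,
        nsmul_eq_mul]
    rw [hs]
    field_simp
  have hφbound : ∀ ω, |φ ((∑ i, X i ω) / n) - φ μ| ≤ (L:ℝ) * (Z ω / n) := by
    intro ω
    have h := hφ.dist_le_mul ((∑ i, X i ω) / n) μ
    rw [Real.dist_eq, Real.dist_eq] at h
    calc |φ ((∑ i, X i ω) / n) - φ μ| ≤ (L:ℝ) * |(∑ i, X i ω) / n - μ| := h
      _ = (L:ℝ) * (Z ω / n) := by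
          rw [hTsub ω, abs_div, Nat.abs_cast]
  have hTmeas : Measurable (fun ω => (∑ i, X i ω) / (n:ℝ)) :=
    (Finset.measurable_sum _ (fun i _ => hmeas i)).div_const _
  have hZn_int : Integrable (fun ω => (L:ℝ) * (Z ω / n)) P := (hZint.div_const _).const_mul _
  have hφT_int : Integrable (fun ω => φ ((∑ i, X i ω) / n)) P := by
    refine Integrable.mono ((integrable_const (|φ μ|)).add hZn_int)
      (hφ.continuous.measurable.comp hTmeas).aestronglyMeasurable ?_
    filter_upwards with ω
    simp only [Pi.add_apply, Real.norm_eq_abs]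
    have h1 := hφbound ω
    have h2 : |φ ((∑ i, X i ω) / n)| - |φ μ| ≤ |φ ((∑ i, X i ω) / n) - φ μ| :=
      abs_sub_abs_le_abs_sub _ _
    have h3 : 0 ≤ (L:ℝ) * (Z ω / n) := by positivity
    rw [abs_of_nonneg (by positivity : (0:ℝ) ≤ |φ μ| + (L:ℝ) * (Z ω / n))]
    linarith
  have hmain : |∫ ω, φ ((∑ i, X i ω) / n) ∂P - φ μ| ≤ (L:ℝ) * (m / n) := by
    rw [show ∫ ω, φ ((∑ i, X i ω) / n) ∂P - φ μ
        = ∫ ω, (φ ((∑ i, X i ω) / n) - φ μ) ∂P by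
      rw [integral_sub hφT_int (integrable_const _), integral_const]; simp]
    have h2 := norm_integral_le_integral_norm (μ := P) (fun ω => φ ((∑ i, X i ω) / n) - φ μ)
    simp only [Real.norm_eq_abs] at h2
    calc |∫ ω, (φ ((∑ i, X i ω) / n) - φ μ) ∂P| ≤ ∫ ω, |φ ((∑ i, X i ω) / n) - φ μ| ∂P := h2
      _ ≤ ∫ ω, (L:ℝ) * (Z ω / n) ∂P :=
          integral_mono (hφT_int.sub (integrable_const _)).abs hZn_int hφbound
      _ = (L:ℝ) * (m / n) := by rw [integral_const_mul, integral_div]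
  have heq : (4 * Cα / (n:ℝ) ^ α) ^ (1/p) = (4 * (n:ℝ) * Cα) ^ (1/p) / n := by
    have hna : (0:ℝ) < (n:ℝ) ^ α := Real.rpow_pos_of_pos hn0 _
    have h1 : (4:ℝ) * Cα / (n:ℝ) ^ α = (4 * (n:ℝ) * Cα) / (n:ℝ) ^ p := by
      rw [hpdef, Real.rpow_add hn0, Real.rpow_one]
      field_simp
    rw [h1, Real.div_rpow (by positivity) (Real.rpow_nonneg hn0.le p), one_div,
      Real.rpow_rpow_inv hn0.le hp0.ne']
  calc |∫ ω, φ ((∑ i, X i ω) / n) ∂P - φ μ| ≤ (L:ℝ) * (m / n) := hmain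
    _ ≤ (L:ℝ) * ((4 * Cα / (n:ℝ) ^ α) ^ (1/p)) := by
        rw [heq]
        have hd : m / n ≤ (4 * (n:ℝ) * Cα) ^ (1/p) / n := by gcongr
        exact mul_le_mul_of_nonneg_left hd L.coe_nonneg
end

section
/- Let (Ω, F, P) be a probability space with a filtration F_0 ⊆ F_1 ⊆ ⋯ ⊆ F_n, and let X_1,…,X_n be square-integrable random variables with X_i F_i-measurable, satisfying μ̲ ≤ E[X_i | F_{i−1}] ≤ μ̄ almost surely and E[(X_i − E[X_i | F_{i−1}])²] ≤ σ² for all i ≤ n. Then for every Lipschitz function φ : ℝ → ℝ with Lipschitz constant L, E[φ(S_n/n)] − max_{r∈[μ̲,μ̄]} φ(r) ≤ L σ/√n, where S_n := X_1 + ⋯ + X_n. -/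
open MeasureTheory

open scoped ENNReal NNReal

lemma memℒp_condexp_two {Ω : Type*} {m m0 : MeasurableSpace Ω} (P : Measure Ω)
    [IsProbabilityMeasure P] (hm : m ≤ m0) {f : Ω → ℝ}
    (hf : MemLp f 2 P) : MemLp (P[f|m]) 2 P := by
  have hgm : AEStronglyMeasurable[m] (((condExpL2 ℝ ℝ hm (hf.toLp f)) : Lp ℝ 2 P) : Ω → ℝ) P :=
    lpMeas.aestronglyMeasurable _
  have heq : (((condExpL2 ℝ ℝ hm (hf.toLp f)) : Lp ℝ 2 P) : Ω → ℝ) =ᵐ[P] P[f|m] := by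
    refine ae_eq_condExp_of_forall_setIntegral_eq hm (hf.integrable one_le_two)
      (fun s _ _ => ((Lp.memLp _).integrable one_le_two).integrableOn)
      (fun s hs hμs => ?_) hgm
    exact (integral_condExpL2_eq (𝕜 := ℝ) hm (hf.toLp f) hs hμs.ne).trans
      (setIntegral_congr_ae (hm s hs) ((hf.coeFn_toLp).mono fun x hx _ => hx))
  exact (Lp.memLp _).ae_eq heq

lemma integrable_mul_of_memℒp_two {Ω : Type*} {m0 : MeasurableSpace Ω} {P : Measure Ω} [IsFiniteMeasure P]
    {f g : Ω → ℝ} (hf : MemLp f 2 P) (hg : MemLp g 2 P) :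
    Integrable (fun ω => f ω * g ω) P := by
  have hpqr : (1:ℝ≥0∞)/1 = 1/2 + 1/2 := by
    rw [ENNReal.div_add_div_same, one_add_one_eq_two,
      ENNReal.div_self two_ne_zero ENNReal.ofNat_ne_top,
      ENNReal.div_self one_ne_zero ENNReal.one_ne_top]
  have h : MemLp (f • g) 1 P := hg.smul hf
  exact (h.integrable le_rfl : Integrable (f • g) P)


/-- One-sided LLN estimate with variance-type bound: if the conditional means lie
in `[μ̲, μ̄]` and the conditional variances are bounded by `σ²`, then
`E[φ(S_n/n)] - max_{r∈[μ̲,μ̄]} φ(r) ≤ L σ / √n`. -/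
theorem lln_rate_adapted_variance
    {Ω : Type*} [MeasurableSpace Ω] (P : Measure Ω) [IsProbabilityMeasure P]
    (n : ℕ) (hn : 1 ≤ n) (ℱ : ℕ → MeasurableSpace Ω)
    (hℱ_mono : Monotone ℱ) (hℱ_le : ∀ i, ℱ i ≤ ‹MeasurableSpace Ω›)
    (X : ℕ → Ω → ℝ)
    (hmeas : ∀ i ∈ Finset.Icc 1 n, Measurable[ℱ i] (X i))
    (hL2 : ∀ i ∈ Finset.Icc 1 n, MemLp (X i) 2 P)
    (μlow μbar : ℝ) (hμ : μlow ≤ μbar)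
    (hcond : ∀ i ∈ Finset.Icc 1 n,
      ∀ᵐ ω ∂P, μlow ≤ (P[X i | ℱ (i - 1)]) ω ∧ (P[X i | ℱ (i - 1)]) ω ≤ μbar)
    (σ : ℝ) (hσ : 0 ≤ σ)
    (hvar : ∀ i ∈ Finset.Icc 1 n,
      ∫ ω, (X i ω - (P[X i | ℱ (i - 1)]) ω) ^ 2 ∂P ≤ σ ^ 2)
    (φ : ℝ → ℝ) (L : NNReal) (hφ : LipschitzWith L φ) :
    ∫ ω, φ ((∑ i ∈ Finset.Icc 1 n, X i ω) / n) ∂P -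
        sSup (φ '' Set.Icc μlow μbar) ≤
      (L : ℝ) * σ / Real.sqrt n := by
  classical
  set A := Finset.Icc 1 n with hA
  set M : ℕ → Ω → ℝ := fun i => P[X i | ℱ (i - 1)] with hM
  set d : ℕ → Ω → ℝ := fun i ω => X i ω - M i ω with hd
  have hnpos : (0:ℝ) < n := by exact_mod_cast hn
  -- basic facts
  have hX2 : ∀ i ∈ A, MemLp (X i) 2 P := hL2
  have hM2 : ∀ i ∈ A, MemLp (M i) 2 P := fun i hi =>
    memℒp_condexp_two P (hℱ_le _) (hX2 i hi)
  have hd2 : ∀ i ∈ A, MemLp (d i) 2 P := fun i hi => (hX2 i hi).sub (hM2 i hi)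
  have hdint : ∀ i ∈ A, Integrable (d i) P := fun i hi => (hd2 i hi).integrable one_le_two
  have hdSM : ∀ i ∈ A, StronglyMeasurable[ℱ i] (d i) := by
    intro i hi
    exact ((hmeas i hi).stronglyMeasurable).sub
      (stronglyMeasurable_condExp.mono (hℱ_mono (Nat.sub_le i 1)))
  -- conditional expectation of d j is 0
  have hdcond : ∀ j ∈ A, P[d j | ℱ (j-1)] =ᵐ[P] 0 := by
    intro j hj
    have h1 : P[d j | ℱ (j-1)] =ᵐ[P] P[X j | ℱ (j-1)] - P[M j | ℱ (j-1)] :=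
      condExp_sub ((hX2 j hj).integrable one_le_two) integrable_condExp _
    have h2 : P[M j | ℱ (j-1)] = M j :=
      condExp_of_stronglyMeasurable (hℱ_le _) stronglyMeasurable_condExp integrable_condExp
    refine h1.trans ?_
    rw [h2]
    filter_upwards with ω
    simp [hM]
  -- cross terms vanish
  have hprod : ∀ i ∈ A, ∀ j ∈ A, Integrable (fun ω => d i ω * d j ω) P :=
    fun i hi j hj => integrable_mul_of_memℒp_two (hd2 i hi) (hd2 j hj)
  have hcross : ∀ i ∈ A, ∀ j ∈ A, i < j → ∫ ω, d i ω * d j ω ∂P = 0 := by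
    intro i hi j hj hij
    have hm : ℱ (j-1) ≤ _ := hℱ_le (j-1)
    have hdiSM : StronglyMeasurable[ℱ (j-1)] (d i) :=
      (hdSM i hi).mono (hℱ_mono (Nat.le_sub_one_of_lt hij))
    have hpull : P[(fun ω => d i ω * d j ω) | ℱ (j-1)] =ᵐ[P] d i * P[d j | ℱ (j-1)] :=
      condExp_mul_of_stronglyMeasurable_left hdiSM (hprod i hi j hj) (hdint j hj)
    have hzero : P[(fun ω => d i ω * d j ω) | ℱ (j-1)] =ᵐ[P] 0 := by
      refine hpull.trans ?_
      filter_upwards [hdcond j hj] with ω hω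
      simp [hω]
    calc ∫ ω, d i ω * d j ω ∂P
        = ∫ ω, (P[(fun ω => d i ω * d j ω) | ℱ (j-1)]) ω ∂P :=
          (integral_condExp hm).symm
      _ = 0 := by rw [integral_congr_ae hzero]; simp
  -- second moment of the sum
  set D : Ω → ℝ := fun ω => ∑ i ∈ A, d i ω with hD
  have hD2 : MemLp D 2 P :=
    (memLp_finsetSum' A (fun i hi => hd2 i hi)).ae_eq
      (Filter.Eventually.of_forall fun ω => Finset.sum_apply ω A d)
  have hDsq : ∫ ω, D ω ^ 2 ∂P ≤ n * σ ^ 2 := by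
    have hexp : ∀ ω, D ω ^ 2 = ∑ i ∈ A, ∑ j ∈ A, d i ω * d j ω := by
      intro ω
      rw [hD, sq, Finset.sum_mul_sum]
    calc ∫ ω, D ω ^ 2 ∂P = ∑ i ∈ A, ∑ j ∈ A, ∫ ω, d i ω * d j ω ∂P := by
          simp_rw [hexp]
          rw [integral_finset_sum A (fun i hi =>
            integrable_finset_sum A (fun j hj => hprod i hi j hj))]
          exact Finset.sum_congr rfl fun i hi =>
            integral_finset_sum A (fun j hj => hprod i hi j hj)
      _ = ∑ i ∈ A, ∫ ω, d i ω * d i ω ∂P := by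
          refine Finset.sum_congr rfl fun i hi => ?_
          refine Finset.sum_eq_single_of_mem i hi fun j hj hji => ?_
          rcases lt_or_gt_of_ne (Ne.symm hji) with h | h
          · exact hcross i hi j hj h
          · rw [show (fun ω => d i ω * d j ω) = fun ω => d j ω * d i ω from
              funext fun ω => mul_comm _ _]
            exact hcross j hj i hi h
      _ ≤ ∑ _i ∈ A, σ ^ 2 := by
          refine Finset.sum_le_sum fun i hi => ?_
          simpa [sq] using hvar i hi
      _ = n * σ ^ 2 := by
          rw [Finset.sum_const, Nat.card_Icc]
          simp
  -- Cauchy-Schwarz : E|D| ≤ sqrt(n) σ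
  have habs : ∫ ω, |D ω| ∂P ≤ Real.sqrt n * σ := by
    have hDabs2 : MemLp (fun ω => |D ω|) 2 P := hD2.abs
    have hvarnn := ProbabilityTheory.variance_nonneg (fun ω => |D ω|) P
    rw [ProbabilityTheory.variance_eq_sub hDabs2] at hvarnn
    have h1 : (∫ ω, |D ω| ∂P) ^ 2 ≤ ∫ ω, D ω ^ 2 ∂P := by
      have : (∫ ω, |D ω| ∂P) ^ 2 ≤ ∫ ω, |D ω| ^ 2 ∂P := by
        simpa using hvarnn
      simpa [sq_abs] using this
    have h2 : (∫ ω, |D ω| ∂P) ^ 2 ≤ (Real.sqrt n * σ) ^ 2 := by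
      refine h1.trans (hDsq.trans_eq ?_)
      rw [mul_pow, Real.sq_sqrt hnpos.le]
    have hnn : 0 ≤ ∫ ω, |D ω| ∂P := integral_nonneg fun ω => abs_nonneg _
    have hrs : 0 ≤ Real.sqrt n * σ := mul_nonneg (Real.sqrt_nonneg _) hσ
    nlinarith [h2, hnn, hrs]
  -- the sSup bound
  have hne : (φ '' Set.Icc μlow μbar).Nonempty := ⟨φ μlow, ⟨μlow, ⟨le_rfl, hμ⟩, rfl⟩⟩
  have hbdd : BddAbove (φ '' Set.Icc μlow μbar) :=
    (isCompact_Icc.image hφ.continuous).bddAbove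
  -- a.e. pointwise bound
  have hae : ∀ᵐ ω ∂P, φ ((∑ i ∈ A, X i ω) / n)
      ≤ sSup (φ '' Set.Icc μlow μbar) + (L : ℝ) / n * |D ω| := by
    have hall : ∀ᵐ ω ∂P, ∀ i ∈ A, μlow ≤ M i ω ∧ M i ω ≤ μbar :=
      (ae_ball_iff A.countable_toSet).2 hcond
    filter_upwards [hall] with ω hω
    set a : ℝ := (∑ i ∈ A, M i ω) / n with ha
    have haIcc : a ∈ Set.Icc μlow μbar := by
      constructor
      · rw [ha, le_div_iff₀ hnpos]
        calc μlow * n = ∑ _i ∈ A, μlow := by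
              rw [Finset.sum_const, Nat.card_Icc]; simp [mul_comm]
          _ ≤ ∑ i ∈ A, M i ω := Finset.sum_le_sum fun i hi => (hω i hi).1
      · rw [ha, div_le_iff₀ hnpos]
        calc (∑ i ∈ A, M i ω) ≤ ∑ _i ∈ A, μbar :=
              Finset.sum_le_sum fun i hi => (hω i hi).2
          _ = μbar * n := by rw [Finset.sum_const, Nat.card_Icc]; simp [mul_comm]
    have hlip : φ ((∑ i ∈ A, X i ω) / n) - φ a ≤ (L : ℝ) * |(∑ i ∈ A, X i ω) / n - a| := by
      have := hφ.dist_le_mul ((∑ i ∈ A, X i ω) / n) a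
      rw [Real.dist_eq, Real.dist_eq] at this
      calc φ ((∑ i ∈ A, X i ω) / n) - φ a ≤ |φ ((∑ i ∈ A, X i ω) / n) - φ a| := le_abs_self _
        _ ≤ (L : ℝ) * |(∑ i ∈ A, X i ω) / n - a| := this
    have hdiff : (∑ i ∈ A, X i ω) / n - a = D ω / n := by
      rw [ha, hD, div_sub_div_same, ← Finset.sum_sub_distrib]
    have hsup : φ a ≤ sSup (φ '' Set.Icc μlow μbar) :=
      le_csSup hbdd (Set.mem_image_of_mem φ haIcc)
    have : φ ((∑ i ∈ A, X i ω) / n) ≤ φ a + (L : ℝ) * (|D ω| / n) := by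
      have h3 : |(∑ i ∈ A, X i ω) / n - a| = |D ω| / n := by
        rw [hdiff, abs_div, abs_of_pos hnpos]
      linarith [hlip, h3 ▸ hlip]
    calc φ ((∑ i ∈ A, X i ω) / n) ≤ φ a + (L : ℝ) * (|D ω| / n) := this
      _ ≤ sSup (φ '' Set.Icc μlow μbar) + (L : ℝ) / n * |D ω| := by
        rw [div_mul_eq_mul_div, mul_div_assoc]
        linarith
  -- integrability of both sides
  have hSint : Integrable (fun ω => (∑ i ∈ A, X i ω) / n) P := by
    exact (integrable_finset_sum A fun i hi => (hX2 i hi).integrable one_le_two).div_const n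
  have hLHSint : Integrable (fun ω => φ ((∑ i ∈ A, X i ω) / n)) P := by
    have hmeas' : AEStronglyMeasurable (fun ω => φ ((∑ i ∈ A, X i ω) / n)) P :=
      hφ.continuous.comp_aestronglyMeasurable hSint.aestronglyMeasurable
    refine Integrable.mono' ((hSint.abs.const_mul (L : ℝ)).add (integrable_const |φ 0|))
      hmeas' ?_
    filter_upwards with ω
    have := hφ.dist_le_mul ((∑ i ∈ A, X i ω) / n) 0
    rw [Real.dist_eq, Real.dist_eq, sub_zero] at this
    calc ‖φ ((∑ i ∈ A, X i ω) / n)‖ = |φ ((∑ i ∈ A, X i ω) / n)| := rfl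
      _ ≤ |φ ((∑ i ∈ A, X i ω) / n) - φ 0| + |φ 0| := by
          have := abs_sub_abs_le_abs_sub (φ ((∑ i ∈ A, X i ω) / n)) (φ 0)
          calc |φ ((∑ i ∈ A, X i ω) / n)|
              = |φ ((∑ i ∈ A, X i ω) / n) - φ 0 + φ 0| := by rw [sub_add_cancel]
            _ ≤ |φ ((∑ i ∈ A, X i ω) / n) - φ 0| + |φ 0| := abs_add_le _ _
      _ ≤ (L : ℝ) * |(∑ i ∈ A, X i ω) / n| + |φ 0| := by linarith
  have hRHSint : Integrable (fun ω =>
      sSup (φ '' Set.Icc μlow μbar) + (L : ℝ) / n * |D ω|) P :=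
    (integrable_const _).add (((hD2.integrable one_le_two).abs).const_mul _)
  -- conclude
  have hint : ∫ ω, φ ((∑ i ∈ A, X i ω) / n) ∂P
      ≤ sSup (φ '' Set.Icc μlow μbar) + (L : ℝ) / n * ∫ ω, |D ω| ∂P := by
    calc ∫ ω, φ ((∑ i ∈ A, X i ω) / n) ∂P
        ≤ ∫ ω, (sSup (φ '' Set.Icc μlow μbar) + (L : ℝ) / n * |D ω|) ∂P :=
          integral_mono_ae hLHSint hRHSint hae
      _ = sSup (φ '' Set.Icc μlow μbar) + (L : ℝ) / n * ∫ ω, |D ω| ∂P := by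
          rw [integral_add (integrable_const _)
            (((hD2.integrable one_le_two).abs).const_mul _)]
          simp [integral_const, integral_const_mul]
  have hfinal : (L : ℝ) / n * ∫ ω, |D ω| ∂P ≤ (L : ℝ) * σ / Real.sqrt n := by
    have hLnn : (0:ℝ) ≤ (L : ℝ) / n := div_nonneg L.2 hnpos.le
    calc (L : ℝ) / n * ∫ ω, |D ω| ∂P ≤ (L : ℝ) / n * (Real.sqrt n * σ) :=
          mul_le_mul_of_nonneg_left habs hLnn
      _ = (L : ℝ) * σ / Real.sqrt n := by
          rw [div_mul_eq_mul_div, eq_div_iff (Real.sqrt_ne_zero'.2 hnpos).symm.symm]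
          field_simp
          rw [Real.sq_sqrt hnpos.le]
          ring
  linarith
end

section
/- Let (Ω, F, P) be a probability space with a filtration F_0 ⊆ F_1 ⊆ ⋯ ⊆ F_n, and let X_1,…,X_n be square-integrable random variables with X_i F_i-measurable, satisfying μ̲ ≤ E[X_i | F_{i−1}] ≤ μ̄ almost surely for all i ≤ n. Suppose σ̄² is such that inf_{μ∈[μ̲,μ̄]} E[(X_i − μ)²] ≤ σ̄² for every i ≤ n. Then E[d²_{[μ̲,μ̄]}(S_n/n)] ≤ σ̄²/n, where S_n := X_1 + ⋯ + X_n and d_{[μ̲,μ̄]}(x) := inf_{y∈[μ̲,μ̄]} |x − y|. -/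
open MeasureTheory

private lemma l2_mul_integrable {Ω : Type*} [MeasurableSpace Ω] {P : Measure Ω}
    {f g : Ω → ℝ} (hf : MemLp f 2 P) (hg : MemLp g 2 P) :
    Integrable (fun ω => f ω * g ω) P := by
  have := hf.smul (φ := g) hg (r := 1)
    (hpqr := ⟨by simp [ENNReal.div_add_div_same, ENNReal.div_self, ENNReal.inv_two_add_inv_two]⟩)
  rw [memLp_one_iff_integrable] at this
  exact this.congr (Filter.Eventually.of_forall fun ω => by simp [mul_comm])

private lemma orth_zero {Ω : Type*} {m m0 : MeasurableSpace Ω} (hm : m ≤ m0)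
    {P : Measure Ω} [IsProbabilityMeasure P]
    {f g : Ω → ℝ} (hfm : StronglyMeasurable[m] f)
    (hf : MemLp f 2 P) (hg : MemLp g 2 P)
    (hg0 : P[g|m] =ᵐ[P] 0) :
    ∫ ω, f ω * g ω ∂P = 0 := by
  have hint : Integrable (f * g) P := l2_mul_integrable hf hg
  have h1 : P[f * g|m] =ᵐ[P] f * P[g|m] :=
    condExp_mul_of_stronglyMeasurable_left hfm hint (hg.integrable one_le_two)
  have h2 : P[f * g|m] =ᵐ[P] 0 := by
    filter_upwards [h1, hg0] with ω ha hb
    simp only [ha, Pi.mul_apply, hb, Pi.zero_apply, mul_zero]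
  calc ∫ ω, f ω * g ω ∂P = ∫ ω, (P[f * g|m]) ω ∂P := (integral_condExp hm).symm
    _ = ∫ _ω, (0:ℝ) ∂P := integral_congr_ae h2
    _ = 0 := by simp

/-- LLN with rate for the squared distance to `[μ̲, μ̄]`: if the conditional
means lie in `[μ̲, μ̄]` and `inf_{μ∈[μ̲,μ̄]} E[(X_i - μ)²] ≤ σ̄²`, then
`E[d²_{[μ̲,μ̄]}(S_n/n)] ≤ σ̄²/n`. -/
theorem lln_dist_sq_adapted
    {Ω : Type*} [MeasurableSpace Ω] (P : Measure Ω) [IsProbabilityMeasure P]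
    (n : ℕ) (hn : 1 ≤ n) (ℱ : ℕ → MeasurableSpace Ω)
    (hℱ_mono : Monotone ℱ) (hℱ_le : ∀ i, ℱ i ≤ ‹MeasurableSpace Ω›)
    (X : ℕ → Ω → ℝ)
    (hmeas : ∀ i ∈ Finset.Icc 1 n, Measurable[ℱ i] (X i))
    (hL2 : ∀ i ∈ Finset.Icc 1 n, MemLp (X i) 2 P)
    (μlow μbar : ℝ) (hμ : μlow ≤ μbar)
    (hcond : ∀ i ∈ Finset.Icc 1 n,
      ∀ᵐ ω ∂P, μlow ≤ (P[X i | ℱ (i - 1)]) ω ∧ (P[X i | ℱ (i - 1)]) ω ≤ μbar)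
    (σ2 : ℝ)
    (hvar : ∀ i ∈ Finset.Icc 1 n,
      sInf ((fun μ : ℝ => ∫ ω, (X i ω - μ) ^ 2 ∂P) '' Set.Icc μlow μbar) ≤ σ2) :
    ∫ ω, (Metric.infDist ((∑ i ∈ Finset.Icc 1 n, X i ω) / n)
        (Set.Icc μlow μbar)) ^ 2 ∂P ≤ σ2 / n := by
  have hn0 : (0:ℝ) < (n:ℝ) := by exact_mod_cast hn
  set I := Finset.Icc 1 n with hI
  have hcard : (I.card : ℝ) = n := by rw [hI, Nat.card_Icc]; simp
  set M : ℕ → Ω → ℝ := fun i => P[X i | ℱ (i-1)] with hMdef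
  have hMm : ∀ i, StronglyMeasurable[ℱ (i-1)] (M i) := fun _ => stronglyMeasurable_condExp
  have hM2 : ∀ i ∈ I, MemLp (M i) 2 P := by
    intro i hi
    refine MemLp.of_bound ((hMm i).mono (hℱ_le _)).aestronglyMeasurable
      (max |μlow| |μbar|) ?_
    filter_upwards [hcond i hi] with ω hω
    rw [Real.norm_eq_abs]
    exact abs_le_max_abs_abs hω.1 hω.2
  set Y : ℕ → Ω → ℝ := fun i ω => X i ω - M i ω with hYdef
  have hY2 : ∀ i ∈ I, MemLp (Y i) 2 P := fun i hi => (hL2 i hi).sub (hM2 i hi)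
  have hYm : ∀ i ∈ I, StronglyMeasurable[ℱ i] (Y i) := fun i hi =>
    ((hmeas i hi).stronglyMeasurable).sub ((hMm i).mono (hℱ_mono (Nat.sub_le i 1)))
  have hY0 : ∀ i ∈ I, P[Y i | ℱ (i-1)] =ᵐ[P] 0 := by
    intro i hi
    have hXi : Integrable (X i) P := (hL2 i hi).integrable one_le_two
    have hMi : Integrable (M i) P := (hM2 i hi).integrable one_le_two
    have h1 : P[X i - M i | ℱ (i-1)] =ᵐ[P] P[X i | ℱ (i-1)] - P[M i | ℱ (i-1)] :=
      condExp_sub hXi hMi _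
    have h2 : P[M i | ℱ (i-1)] = M i :=
      condExp_of_stronglyMeasurable (hℱ_le _) (hMm i) hMi
    have h3 : Y i = X i - M i := rfl
    rw [h3]
    filter_upwards [h1] with ω hω
    rw [hω]
    rw [Pi.sub_apply, h2]; simp [hMdef]
  -- orthogonality
  have horth : ∀ i ∈ I, ∀ j ∈ I, i ≠ j → ∫ ω, Y i ω * Y j ω ∂P = 0 := by
    have key : ∀ i ∈ I, ∀ j ∈ I, i < j → ∫ ω, Y i ω * Y j ω ∂P = 0 := by
      intro i hi j hj hij
      refine orth_zero (hℱ_le _) ((hYm i hi).mono (hℱ_mono ?_)) (hY2 i hi) (hY2 j hj)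
        (hY0 j hj)
      omega
    intro i hi j hj hne
    rcases hne.lt_or_gt with h | h
    · exact key i hi j hj h
    · have := key j hj i hi h
      simpa [mul_comm] using this
  set S : Ω → ℝ := fun ω => ∑ i ∈ I, Y i ω with hSdef
  have hS2 : MemLp S 2 P := memLp_finset_sum I (fun i hi => hY2 i hi)
  have hSsq : ∫ ω, S ω ^ 2 ∂P = ∑ i ∈ I, ∫ ω, Y i ω * Y i ω ∂P := by
    have hexp : ∀ ω, S ω ^ 2 = ∑ i ∈ I, ∑ j ∈ I, Y i ω * Y j ω := by
      intro ω
      rw [sq]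
      exact Finset.sum_mul_sum I I _ _
    calc ∫ ω, S ω ^ 2 ∂P = ∫ ω, ∑ i ∈ I, ∑ j ∈ I, Y i ω * Y j ω ∂P := by simp_rw [hexp]
      _ = ∑ i ∈ I, ∫ ω, ∑ j ∈ I, Y i ω * Y j ω ∂P :=
          integral_finset_sum I (fun i hi => integrable_finset_sum I
            fun j hj => l2_mul_integrable (hY2 i hi) (hY2 j hj))
      _ = ∑ i ∈ I, ∑ j ∈ I, ∫ ω, Y i ω * Y j ω ∂P :=
          Finset.sum_congr rfl (fun i hi => integral_finset_sum I
            fun j hj => l2_mul_integrable (hY2 i hi) (hY2 j hj))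
      _ = ∑ i ∈ I, ∫ ω, Y i ω * Y i ω ∂P :=
          Finset.sum_congr rfl (fun i hi => Finset.sum_eq_single_of_mem i hi
            fun j hj hne => horth i hi j hj hne.symm)
  -- variance bound per term
  have hYvar : ∀ i ∈ I, ∫ ω, Y i ω * Y i ω ∂P ≤ σ2 := by
    intro i hi
    refine le_trans ?_ (hvar i hi)
    refine le_csInf ⟨_, ⟨μlow, Set.left_mem_Icc.2 hμ, rfl⟩⟩ ?_
    rintro b ⟨μ, _hμmem, rfl⟩
    have hMμ2 : MemLp (fun ω => M i ω - μ) 2 P := (hM2 i hi).sub (memLp_const μ)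
    have hcross : ∫ ω, (M i ω - μ) * Y i ω ∂P = 0 :=
      orth_zero (hℱ_le _) ((hMm i).sub stronglyMeasurable_const) hMμ2 (hY2 i hi) (hY0 i hi)
    have hint1 : Integrable (fun ω => Y i ω * Y i ω) P :=
      l2_mul_integrable (hY2 i hi) (hY2 i hi)
    have hint2 : Integrable (fun ω => (M i ω - μ) * Y i ω) P :=
      l2_mul_integrable hMμ2 (hY2 i hi)
    have hint3 : Integrable (fun ω => (M i ω - μ) ^ 2) P := hMμ2.integrable_sq
    have hdecomp : ∫ ω, (X i ω - μ) ^ 2 ∂P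
        = ∫ ω, Y i ω * Y i ω ∂P
          + (2 * ∫ ω, (M i ω - μ) * Y i ω ∂P + ∫ ω, (M i ω - μ) ^ 2 ∂P) := by
      have hfun : ∀ ω, (X i ω - μ) ^ 2
          = Y i ω * Y i ω + (2 * ((M i ω - μ) * Y i ω) + (M i ω - μ) ^ 2) := by
        intro ω; simp only [hYdef]; ring
      have e2 : Integrable (fun ω => 2 * ((M i ω - μ) * Y i ω)) P := hint2.const_mul 2
      have e1 : Integrable (fun ω => 2 * ((M i ω - μ) * Y i ω) + (M i ω - μ) ^ 2) P :=
        e2.add hint3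
      simp_rw [hfun]
      rw [integral_add hint1 e1, integral_add e2 hint3, integral_const_mul]
    have hnn : 0 ≤ ∫ ω, (M i ω - μ) ^ 2 ∂P := integral_nonneg fun ω => sq_nonneg _
    show ∫ ω, Y i ω * Y i ω ∂P ≤ ∫ ω, (X i ω - μ) ^ 2 ∂P
    rw [hdecomp, hcross]
    linarith
  -- pointwise bound
  have hptwise : ∀ᵐ ω ∂P,
      (Metric.infDist ((∑ i ∈ I, X i ω) / n) (Set.Icc μlow μbar)) ^ 2 ≤ (S ω / n) ^ 2 := by
    have hall : ∀ᵐ ω ∂P, ∀ i ∈ (I : Set ℕ), μlow ≤ M i ω ∧ M i ω ≤ μbar :=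
      (ae_ball_iff I.countable_toSet).2 (fun i hi => hcond i (by simpa using hi))
    filter_upwards [hall] with ω hω
    have hω' : ∀ i ∈ I, μlow ≤ M i ω ∧ M i ω ≤ μbar := fun i hi => hω i (by simpa using hi)
    have hTmem : (∑ i ∈ I, M i ω) / n ∈ Set.Icc μlow μbar := by
      constructor
      · rw [le_div_iff₀ hn0]
        calc μlow * n = ∑ _i ∈ I, μlow := by
              rw [Finset.sum_const, nsmul_eq_mul, hcard]; ring
          _ ≤ ∑ i ∈ I, M i ω := Finset.sum_le_sum fun i hi => (hω' i hi).1
      · rw [div_le_iff₀ hn0]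
        calc ∑ i ∈ I, M i ω ≤ ∑ _i ∈ I, μbar := Finset.sum_le_sum fun i hi => (hω' i hi).2
          _ = μbar * n := by rw [Finset.sum_const, nsmul_eq_mul, hcard]; ring
    have h1 : Metric.infDist ((∑ i ∈ I, X i ω) / n) (Set.Icc μlow μbar) ≤ |S ω / n| := by
      have hd := Metric.infDist_le_dist_of_mem (x := (∑ i ∈ I, X i ω) / (n:ℝ)) hTmem
      rw [Real.dist_eq] at hd
      refine le_trans hd (le_of_eq ?_)
      congr 1
      rw [div_sub_div_same]
      show (∑ i ∈ I, X i ω - ∑ i ∈ I, M i ω) / (n:ℝ) = (∑ i ∈ I, (X i ω - M i ω)) / (n:ℝ)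
      rw [Finset.sum_sub_distrib]
    calc (Metric.infDist ((∑ i ∈ I, X i ω) / n) (Set.Icc μlow μbar)) ^ 2
        ≤ |S ω / n| ^ 2 := pow_le_pow_left₀ Metric.infDist_nonneg h1 2
      _ = (S ω / n) ^ 2 := sq_abs _
  have hintS : Integrable (fun ω => (S ω / n) ^ 2) P := by
    have h := hS2.integrable_sq.const_mul ((1:ℝ) / (n:ℝ) ^ 2)
    refine h.congr (Filter.Eventually.of_forall fun ω => ?_)
    show (1:ℝ) / (n:ℝ) ^ 2 * S ω ^ 2 = (S ω / (n:ℝ)) ^ 2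
    ring
  have hmain : ∫ ω, (Metric.infDist ((∑ i ∈ I, X i ω) / n) (Set.Icc μlow μbar)) ^ 2 ∂P
      ≤ ∫ ω, (S ω / n) ^ 2 ∂P :=
    integral_mono_of_nonneg (Filter.Eventually.of_forall fun ω => sq_nonneg _) hintS hptwise
  refine hmain.trans ?_
  have h1 : ∫ ω, (S ω / n) ^ 2 ∂P = (∫ ω, S ω ^ 2 ∂P) / (n:ℝ) ^ 2 := by
    simp_rw [div_pow]
    rw [integral_div]
  have h2 : ∫ ω, S ω ^ 2 ∂P ≤ n * σ2 := by
    rw [hSsq]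
    calc ∑ i ∈ I, ∫ ω, Y i ω * Y i ω ∂P ≤ ∑ _i ∈ I, σ2 := Finset.sum_le_sum hYvar
      _ = n * σ2 := by rw [Finset.sum_const, nsmul_eq_mul, hcard]
  rw [h1, div_le_div_iff₀ (by positivity) hn0]
  calc (∫ ω, S ω ^ 2 ∂P) * n ≤ ((n:ℝ) * σ2) * n :=
        mul_le_mul_of_nonneg_right h2 hn0.le
    _ = σ2 * (n:ℝ) ^ 2 := by ring
end
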